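/- Let A be an integral domain which is a Jacobson ring, and suppose that for every nonconstant F ∈ A[Y] there exist a nonzero u ∈ A and b ∈ A_u such that the image of F(b) is not a unit of A_u. Then A satisfies (P2): for every nonconstant F ∈ A[Y] there exists b' ∈ A with F(b') not a unit of A. -/
import Mathlib


theorem stmt_10 {A : Type*} [CommRing A] [IsDomain A] [IsJacobsonRing A]
    (h : ∀ F : Polynomial A, 0 < F.natDegree →
      ∃ u : A, u ≠ 0 ∧ ∃ b : Localization.Away u,
        ¬ IsUnit ((F.map (algebraMap A (Localization.Away u))).eval b))
    (F : Polynomial A) (hF : 0 < F.natDegree) :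
    ∃ b' : A, ¬ IsUnit (F.eval b') := by
  obtain ⟨u, hu, b, hb⟩ := h F hF
  let alg := algebraMap A (Localization.Away u)
  -- find a maximal ideal of the localization containing the nonunit F(b)
  obtain ⟨M, hM, hbM⟩ := exists_max_ideal_of_mem_nonunits (mem_nonunits_iff.2 hb)
  obtain ⟨hpmax, hup⟩ :=
    (IsLocalization.isMaximal_iff_isMaximal_disjoint (Localization.Away u) u M).1 hM
  set p : Ideal A := Ideal.comap alg M with hp
  haveI : p.IsMaximal := hpmax
  -- u is invertible mod p
  obtain ⟨v, c, hc, hvc⟩ := hpmax.exists_inv hup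
  have hvp : u * v - 1 ∈ p := by
    have : u * v - 1 = -c := by rw [← hvc]; ring
    rw [this]
    exact p.neg_mem hc
  -- write b = a / u^n
  obtain ⟨⟨a, s⟩, hs⟩ := IsLocalization.surj (Submonoid.powers u) b
  obtain ⟨n, hn⟩ := s.2
  have hs' : b * alg (u ^ n) = alg a := by rw [← hn] at hs; exact hs
  refine ⟨a * v ^ n, fun hunit' => hM.ne_top (Ideal.eq_top_of_isUnit_mem M ?_ (hunit'.map alg))⟩
  -- show alg (F.eval (a * v^n)) ∈ M, by comparing with F(b) in S/M
  set q := Ideal.Quotient.mk M with hq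
  have key : q (alg (a * v ^ n)) = q b := by
    rw [← sub_eq_zero, ← map_sub, Ideal.Quotient.eq_zero_iff_mem]
    have h1 : alg (a * v ^ n) - b = b * ((alg (u * v)) ^ n - 1 ^ n) := by
      rw [map_mul, map_pow, ← hs', map_mul, map_pow]
      ring
    have h2 : alg (u * v) - 1 ∈ M := by
      simpa [hp, Ideal.mem_comap, map_sub, map_one] using hvp
    obtain ⟨c, hc⟩ := sub_dvd_pow_sub_pow (alg (u * v)) 1 n
    rw [h1, hc]
    exact M.mul_mem_left b (M.mul_mem_right c h2)
  have heval : q (alg (F.eval (a * v ^ n))) = q ((F.map alg).eval b) := by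
    rw [← Polynomial.eval₂_hom alg, Polynomial.eval_map]
    rw [Polynomial.hom_eval₂, Polynomial.hom_eval₂, key]
  rw [← Ideal.Quotient.eq_zero_iff_mem] at hbM ⊢
  rw [heval, hbM]
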